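/- If Z1 and Z2 are independent standard normal random variables, then W = Z1*Z2/sqrt(Z1^2 + Z2^2) is a normal random variable with mean 0 and variance 1/4. -/

import Mathlib

open MeasureTheory ProbabilityTheory Real Set
open scoped ENNReal NNReal

noncomputable section

namespace AuxW

def g (p : ℝ × ℝ) : ℝ := p.1 * p.2 / Real.sqrt (p.1 ^ 2 + p.2 ^ 2)

lemma measurable_g : Measurable g := by
  unfold g
  fun_prop

def h (p : ℝ × ℝ) : ℝ := p.2 / 2

lemma measurable_h : Measurable h := measurable_snd.div_const 2

def φr (p : ℝ × ℝ) : ℝ := gaussianPDFReal 0 1 p.1 * gaussianPDFReal 0 1 p.2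

lemma measurable_φr : Measurable φr :=
  ((measurable_gaussianPDFReal 0 1).comp measurable_fst).mul
    ((measurable_gaussianPDFReal 0 1).comp measurable_snd)

lemma φr_nonneg (p : ℝ × ℝ) : 0 ≤ φr p :=
  mul_nonneg (gaussianPDFReal_nonneg _ _ _) (gaussianPDFReal_nonneg _ _ _)

lemma withDensity_prod {f g : ℝ → ℝ≥0∞} (hf : Measurable f) (hg : Measurable g) :
    ((volume : Measure ℝ).withDensity f).prod (volume.withDensity g)
      = ((volume : Measure ℝ).prod volume).withDensity (fun p => f p.1 * g p.2) := by
  ext s hs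
  rw [Measure.prod_apply hs, withDensity_apply _ hs]
  have h1 : ∀ x : ℝ, (volume.withDensity g) (Prod.mk x ⁻¹' s)
      = ∫⁻ y, s.indicator (fun p : ℝ × ℝ => g p.2) (x, y) := by
    intro x
    rw [withDensity_apply _ (measurable_prodMk_left hs),
      ← lintegral_indicator (measurable_prodMk_left hs) _]
    rfl
  simp_rw [h1]
  rw [lintegral_withDensity_eq_lintegral_mul _ hf]
  · rw [← lintegral_indicator hs _, lintegral_prod]
    · congr 1 with x
      simp only [Pi.mul_apply]
      have hm : Measurable fun y : ℝ => s.indicator (fun p : ℝ × ℝ => g p.2) (x, y) :=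
        ((hg.comp measurable_snd).indicator hs).comp measurable_prodMk_left
      have heq : ∀ y : ℝ, s.indicator (fun a : ℝ × ℝ => f a.1 * g a.2) (x, y)
          = f x * s.indicator (fun p : ℝ × ℝ => g p.2) (x, y) := by
        intro y; by_cases hxy : (x, y) ∈ s <;> simp [Set.indicator, hxy]
      simp_rw [heq]
      rw [lintegral_const_mul _ hm]
    · exact ((hf.comp measurable_fst).mul (hg.comp measurable_snd)).indicator hs |>.aemeasurable
  · apply Measurable.lintegral_prod_right
    exact ((hg.comp measurable_snd).indicator hs)

lemma prod_gaussian :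
    (gaussianReal 0 1).prod (gaussianReal 0 1)
      = ((volume : Measure ℝ).prod volume).withDensity
          (fun p => ENNReal.ofReal (φr p)) := by
  rw [gaussianReal_of_var_ne_zero _ one_ne_zero,
    withDensity_prod (measurable_gaussianPDF 0 1) (measurable_gaussianPDF 0 1)]
  congr 1 with p
  rw [gaussianPDF, gaussianPDF, φr, ENNReal.ofReal_mul (gaussianPDFReal_nonneg _ _ _)]

lemma nu_apply (A : Set (ℝ × ℝ)) (hA : MeasurableSet A) :
    ((gaussianReal 0 1).prod (gaussianReal 0 1)) A
      = ENNReal.ofReal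
          (∫ p in polarCoord.target, p.1 • A.indicator φr (polarCoord.symm p)) := by
  have hint : Integrable φr ((volume : Measure ℝ).prod volume) :=
    (integrable_gaussianPDFReal 0 1).mul_prod (integrable_gaussianPDFReal 0 1)
  rw [prod_gaussian, withDensity_apply _ hA,
    ← ofReal_integral_eq_lintegral_ofReal hint.integrableOn (ae_of_all _ fun p => φr_nonneg p),
    ← integral_indicator hA, ← Measure.volume_eq_prod, ← integral_comp_polarCoord_symm]

/-- the `θ`-integral periodicity key lemma -/
lemma key (r t : ℝ) :
    (∫ θ in Ioo (-π) π, (if r * Real.sin (2*θ) ≤ t then (1:ℝ) else 0))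
      = ∫ θ in Ioo (-π) π, (if r * Real.sin θ ≤ t then (1:ℝ) else 0) := by
  set G : ℝ → ℝ := fun θ => if r * Real.sin θ ≤ t then (1:ℝ) else 0 with hG
  have hGmeas : Measurable G :=
    Measurable.ite (measurableSet_le ((Real.measurable_sin).const_mul r) measurable_const)
      measurable_const measurable_const
  have hGper : Function.Periodic G (2*π) := by
    intro x
    simp only [hG]
    rw [Real.sin_add_two_pi]
  have hGint' : ∀ a b : ℝ, IntegrableOn G (Ioc a b) := by
    intro a b
    refine Integrable.mono' (g := fun _ => (1:ℝ))
      ((integrableOn_const_iff).mpr (Or.inr measure_Ioc_lt_top))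
      hGmeas.aestronglyMeasurable.restrict (ae_of_all _ fun x => ?_)
    by_cases hx : r * Real.sin x ≤ t <;> simp [hG, hx]
  have hGint : ∀ a b : ℝ, IntervalIntegrable G volume a b := fun a b => ⟨hGint' a b, hGint' b a⟩
  have hpi : (-π : ℝ) ≤ π := by linarith [pi_pos]
  have e1 : (∫ θ in Ioo (-π) π, G (2*θ)) = ∫ θ in (-π)..π, G (2*θ) := by
    rw [intervalIntegral.integral_of_le hpi, integral_Ioc_eq_integral_Ioo]
  have e2 : (∫ θ in Ioo (-π) π, G θ) = ∫ θ in (-π)..π, G θ := by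
    rw [intervalIntegral.integral_of_le hpi, integral_Ioc_eq_integral_Ioo]
  rw [e1, e2]
  have e3 : (∫ θ in (-π)..π, G (2*θ)) = (2:ℝ)⁻¹ • ∫ x in (2*(-π))..(2*π), G x := by
    rw [← intervalIntegral.integral_comp_mul_left G (two_ne_zero)]
  rw [e3]
  have e4 : (∫ x in (2*(-π))..(2*π), G x)
      = (∫ x in (2*(-π))..0, G x) + ∫ x in (0:ℝ)..(2*π), G x :=
    (intervalIntegral.integral_add_adjacent_intervals (hGint _ _) (hGint _ _)).symm
  have e5 : (∫ x in (2*(-π))..0, G x) = ∫ x in (-π)..π, G x := by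
    have h := hGper.intervalIntegral_add_eq (2*(-π)) (-π)
    rw [show 2*(-π) + 2*π = 0 by ring, show -π + 2*π = π by ring] at h
    exact h
  have e6 : (∫ x in (0:ℝ)..(2*π), G x) = ∫ x in (-π)..π, G x := by
    have h := hGper.intervalIntegral_add_eq 0 (-π)
    rw [show (0:ℝ) + 2*π = 2*π by ring, show -π + 2*π = π by ring] at h
    exact h
  rw [e4, e5, e6, smul_eq_mul]
  ring

lemma sq_cos_add_sq_sin (r θ : ℝ) : (r * Real.cos θ)^2 + (r * Real.sin θ)^2 = r^2 := by
  have hs := Real.sin_sq_add_cos_sq θ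
  nlinarith [hs]

lemma φr_polar (p : ℝ × ℝ) :
    φr (polarCoord.symm p) = (2*π)⁻¹ * Real.exp (-(p.1^2)/2) := by
  have hπ : (0:ℝ) ≤ 2*π := by positivity
  simp only [polarCoord_symm_apply, φr, gaussianPDFReal, NNReal.coe_one, mul_one, sub_zero]
  rw [show (√(2*π))⁻¹ * rexp (-(p.1 * Real.cos p.2)^2 / 2) *
      ((√(2*π))⁻¹ * rexp (-(p.1 * Real.sin p.2)^2 / 2))
    = ((√(2*π)) * (√(2*π)))⁻¹ * (rexp (-(p.1 * Real.cos p.2)^2 / 2)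
        * rexp (-(p.1 * Real.sin p.2)^2 / 2)) by rw [mul_inv]; ring,
    Real.mul_self_sqrt hπ, ← Real.exp_add]
  congr 1
  have := sq_cos_add_sq_sin p.1 p.2
  field_simp
  congr 1
  have hs := Real.sin_sq_add_cos_sq p.2
  linear_combination (-(p.1^2)/2) * hs

def u (r : ℝ) : ℝ := r * ((2*π)⁻¹ * Real.exp (-(r^2)/2))

lemma integrableOn_u : IntegrableOn u (Ioi (0:ℝ)) := by
  have h0 : IntegrableOn (fun x : ℝ => x ^ (1:ℝ) * Real.exp (-(1/2) * x^2)) (Ioi 0) :=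
    integrableOn_rpow_mul_exp_neg_mul_sq one_half_pos (by norm_num)
  have h1 := h0.const_mul ((2*π)⁻¹)
  refine h1.congr (ae_of_all _ fun x => ?_)
  simp only [u]
  rw [Real.rpow_one, show -(1/2)*x^2 = -(x^2)/2 by ring]
  ring

lemma integrableOn_polar (A : Set (ℝ × ℝ)) (hA : MeasurableSet A) :
    IntegrableOn (fun p : ℝ × ℝ => p.1 • A.indicator φr (polarCoord.symm p))
      (Ioi 0 ×ˢ Ioo (-π) π) (volume : Measure (ℝ × ℝ)) := by
  have hb : IntegrableOn (fun p : ℝ × ℝ => u p.1) (Ioi 0 ×ˢ Ioo (-π) π)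
      (volume : Measure (ℝ × ℝ)) := by
    rw [Measure.volume_eq_prod, IntegrableOn, ← Measure.prod_restrict]
    have h2 : Integrable (fun _ : ℝ => (1:ℝ)) (volume.restrict (Ioo (-π) π)) :=
      (integrableOn_const_iff).mpr (Or.inr measure_Ioo_lt_top)
    simpa using integrableOn_u.mul_prod h2
  have hFmeas : Measurable (fun p : ℝ × ℝ => p.1 • A.indicator φr (polarCoord.symm p)) := by
    simp only [polarCoord_symm_apply]
    exact measurable_fst.smul ((measurable_φr.indicator hA).comp (by fun_prop))
  refine hb.mono' hFmeas.aestronglyMeasurable.restrict ?_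
  filter_upwards [ae_restrict_mem (measurableSet_Ioi.prod measurableSet_Ioo)] with p hp
  obtain ⟨hp1, -⟩ := hp
  have hind0 : 0 ≤ A.indicator φr (polarCoord.symm p) :=
    Set.indicator_nonneg (fun x _ => φr_nonneg x) _
  have hind1 : A.indicator φr (polarCoord.symm p) ≤ φr (polarCoord.symm p) :=
    Set.indicator_le_self' (fun x _ => φr_nonneg x) _
  rw [smul_eq_mul, Real.norm_eq_abs, abs_mul, abs_of_pos (α := ℝ) hp1, abs_of_nonneg hind0]
  calc p.1 * A.indicator φr (polarCoord.symm p) ≤ p.1 * φr (polarCoord.symm p) :=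
        mul_le_mul_of_nonneg_left hind1 (le_of_lt hp1)
    _ = u p.1 := by rw [φr_polar, u]

lemma polar_eq (t : ℝ) :
    (∫ p in polarCoord.target, p.1 • ((g ⁻¹' Iic t).indicator φr) (polarCoord.symm p))
      = ∫ p in polarCoord.target, p.1 • ((h ⁻¹' Iic t).indicator φr) (polarCoord.symm p) := by
  have hAg : MeasurableSet (g ⁻¹' Iic t) := measurable_g measurableSet_Iic
  have hAh : MeasurableSet (h ⁻¹' Iic t) := measurable_h measurableSet_Iic
  rw [polarCoord_target, Measure.volume_eq_prod,
    setIntegral_prod _ (Measure.volume_eq_prod ℝ ℝ ▸ integrableOn_polar _ hAg),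
    setIntegral_prod _ (Measure.volume_eq_prod ℝ ℝ ▸ integrableOn_polar _ hAh)]
  refine setIntegral_congr_fun measurableSet_Ioi fun r hr => ?_
  have hrpos : (0:ℝ) < r := hr
  have hg1 : ∀ θ : ℝ, r • (g ⁻¹' Iic t).indicator φr (polarCoord.symm (r, θ))
      = u r * (if r * Real.sin (2*θ) ≤ 2*t then (1:ℝ) else 0) := by
    intro θ
    classical
    have hφ := φr_polar (r, θ)
    have hgv : g (polarCoord.symm (r, θ)) = r * (Real.cos θ * Real.sin θ) := by
      simp only [polarCoord_symm_apply, g]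
      rw [sq_cos_add_sq_sin, Real.sqrt_sq hrpos.le]
      field_simp
    have hiff : g (polarCoord.symm (r, θ)) ≤ t ↔ r * Real.sin (2*θ) ≤ 2*t := by
      rw [hgv, Real.sin_two_mul]
      constructor <;> intro hx <;> nlinarith
    rw [Set.indicator_apply]
    simp only [Set.mem_preimage, Set.mem_Iic]
    by_cases hc : g (polarCoord.symm (r, θ)) ≤ t
    · rw [if_pos hc, if_pos (hiff.mp hc), hφ]
      simp only [u, smul_eq_mul]
      ring
    · rw [if_neg hc, if_neg (fun hx => hc (hiff.mpr hx))]
      simp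
  have hh1 : ∀ θ : ℝ, r • (h ⁻¹' Iic t).indicator φr (polarCoord.symm (r, θ))
      = u r * (if r * Real.sin θ ≤ 2*t then (1:ℝ) else 0) := by
    intro θ
    classical
    have hφ := φr_polar (r, θ)
    have hhv : h (polarCoord.symm (r, θ)) = r * Real.sin θ / 2 := by
      simp only [polarCoord_symm_apply, h]
    have hiff : h (polarCoord.symm (r, θ)) ≤ t ↔ r * Real.sin θ ≤ 2*t := by
      rw [hhv]
      constructor <;> intro hx <;> linarith
    rw [Set.indicator_apply]
    simp only [Set.mem_preimage, Set.mem_Iic]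
    by_cases hc : h (polarCoord.symm (r, θ)) ≤ t
    · rw [if_pos hc, if_pos (hiff.mp hc), hφ]
      simp only [u, smul_eq_mul]
      ring
    · rw [if_neg hc, if_neg (fun hx => hc (hiff.mpr hx))]
      simp
  simp only []
  simp_rw [hg1, hh1]
  rw [integral_const_mul, integral_const_mul, key r (2*t)]

lemma map_h_eq :
    Measure.map h ((gaussianReal 0 1).prod (gaussianReal 0 1)) = gaussianReal 0 (1/4) := by
  have hcomp : h = (fun x : ℝ => (1/2 : ℝ) * x) ∘ Prod.snd := by
    funext p; simp [h]; ring
  rw [hcomp, ← Measure.map_map (by fun_prop) measurable_snd, Measure.map_snd_prod]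
  simp only [measure_univ, one_smul]
  rw [gaussianReal_map_const_mul (1/2 : ℝ)]
  norm_num
  congr 1

lemma map_g_eq :
    Measure.map g ((gaussianReal 0 1).prod (gaussianReal 0 1)) = gaussianReal 0 (1/4) := by
  haveI : IsProbabilityMeasure
      (Measure.map g ((gaussianReal 0 1).prod (gaussianReal 0 1))) :=
    Measure.isProbabilityMeasure_map measurable_g.aemeasurable
  refine Measure.ext_of_Iic _ _ fun t => ?_
  rw [Measure.map_apply measurable_g measurableSet_Iic,
    nu_apply _ (measurable_g measurableSet_Iic), polar_eq,
    ← nu_apply _ (measurable_h measurableSet_Iic),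
    ← Measure.map_apply measurable_h measurableSet_Iic, map_h_eq]

end AuxW

end

theorem stmt0 {Ω : Type*} [MeasurableSpace Ω] (P : Measure Ω) [IsProbabilityMeasure P]
    (Z1 Z2 : Ω → ℝ) (hZ1 : Measurable Z1) (hZ2 : Measurable Z2)
    (hind : IndepFun Z1 Z2 P)
    (h1 : Measure.map Z1 P = gaussianReal 0 1)
    (h2 : Measure.map Z2 P = gaussianReal 0 1) :
    Measure.map (fun ω => Z1 ω * Z2 ω / Real.sqrt (Z1 ω ^ 2 + Z2 ω ^ 2)) P
      = gaussianReal 0 (1 / 4) := by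
  have hpair : Measure.map (fun ω => (Z1 ω, Z2 ω)) P
      = (gaussianReal 0 1).prod (gaussianReal 0 1) := by
    refine ((indepFun_iff_map_prod_eq_prod_map_map hZ1.aemeasurable hZ2.aemeasurable).mp
      hind).trans ?_
    rw [h1, h2]
  calc Measure.map (fun ω => Z1 ω * Z2 ω / Real.sqrt (Z1 ω ^ 2 + Z2 ω ^ 2)) P
      = Measure.map (AuxW.g ∘ fun ω => (Z1 ω, Z2 ω)) P := rfl
    _ = Measure.map AuxW.g (Measure.map (fun ω => (Z1 ω, Z2 ω)) P) :=
        (Measure.map_map AuxW.measurable_g (hZ1.prodMk hZ2)).symm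
    _ = gaussianReal 0 (1/4) := by rw [hpair, AuxW.map_g_eq]
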